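/- Let d ≥ 1, n_M > 0, u ∈ ℝᵈ, v_th > 0, and let f^M(v) = n_M·(2π)^{−d/2}·v_th^{−d}·exp(−|v − u|²/(2v_th²)) be the Maxwellian. Let β : ℝᵈ → ℝ be continuous, bounded, and strictly positive everywhere, and define n_β = ∫ β f^M dv, p_β = ∫ v β f^M dv, E_β = ∫ |v|² β f^M dv, A_β = −∫ β ∇f^M dv, B_β = −∫ β (v·∇f^M) dv. Then the conservative penalization parameters λ_β = (n_β·E_β − |p_β|²)/(n_β·B_β − A_β·p_β) and u_β = (p_β − λ_β·A_β)/n_β satisfy λ_β = v_th² and u_β = u, and consequently the penalization flux vanishes identically: β(v)·(∇f^M(v) + ((v − u_β)/λ_β)·f^M(v)) = 0 for all v ∈ ℝᵈ. -/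

import Mathlib

open MeasureTheory
open scoped RealInnerProductSpace


private lemma grad_gauss' {d : ℕ} (c t : ℝ) (u x : EuclideanSpace ℝ (Fin d)) :
    HasGradientAt (fun v : EuclideanSpace ℝ (Fin d) =>
        c * Real.exp (-‖v - u‖ ^ 2 / (2 * t ^ 2)))
      ((-(t ^ 2)⁻¹ * (c * Real.exp (-‖x - u‖ ^ 2 / (2 * t ^ 2)))) • (x - u)) x := by
  have h1 : HasFDerivAt (fun v : EuclideanSpace ℝ (Fin d) => v - u)
      (ContinuousLinearMap.id ℝ _) x := (hasFDerivAt_id x).sub_const u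
  have h2 : HasFDerivAt (fun v : EuclideanSpace ℝ (Fin d) => ‖v - u‖ ^ 2)
      (2 • (innerSL ℝ (x - u)).comp (ContinuousLinearMap.id ℝ _)) x := h1.norm_sq
  have h3 : HasFDerivAt (fun v : EuclideanSpace ℝ (Fin d) => -‖v - u‖ ^ 2 / (2 * t ^ 2))
      ((-(2 * t ^ 2)⁻¹) • (2 • (innerSL ℝ (x - u)).comp (ContinuousLinearMap.id ℝ _))) x := by
    have := h2.const_smul (-(2 * t ^ 2)⁻¹)
    refine this.congr_of_eventuallyEq (Filter.Eventually.of_forall fun v => ?_)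
    simp [div_eq_mul_inv]; ring
  have h6 := ((h3.exp).const_mul c).hasGradientAt
  convert h6 using 1
  apply (InnerProductSpace.toDual ℝ _).injective
  rw [LinearIsometryEquiv.apply_symm_apply]
  ext y
  simp [InnerProductSpace.toDual_apply_apply, real_inner_smul_left, mul_comm]
  ring_nf

private lemma gauss_int0' {d : ℕ} {b : ℝ} (hb : 0 < b) :
    Integrable (fun v : EuclideanSpace ℝ (Fin d) => Real.exp (-b * ‖v‖ ^ 2)) := by
  have h := GaussianFourier.integrable_cexp_neg_mul_sq_norm_add (V := EuclideanSpace ℝ (Fin d))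
    (b := (b : ℂ)) (by simpa using hb) 0 0
  have h2 := h.norm
  refine h2.congr (Filter.Eventually.of_forall fun v => ?_)
  simp only [Complex.norm_exp]
  norm_num
  exact Or.inl (by norm_cast)

private lemma gauss_int' {d : ℕ} {b : ℝ} (hb : 0 < b) (u : EuclideanSpace ℝ (Fin d)) :
    Integrable (fun v : EuclideanSpace ℝ (Fin d) => Real.exp (-b * ‖v - u‖ ^ 2)) :=
  (gauss_int0' hb).comp_sub_right u

private lemma sq_gauss_int' {d : ℕ} {b : ℝ} (hb : 0 < b) (u : EuclideanSpace ℝ (Fin d)) :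
    Integrable (fun v : EuclideanSpace ℝ (Fin d) => ‖v‖ ^ 2 * Real.exp (-b * ‖v - u‖ ^ 2)) := by
  have hg := (gauss_int' (half_pos hb) u).const_mul (2 * (2 / b) + 2 * ‖u‖ ^ 2)
  refine hg.mono' ?_ (Filter.Eventually.of_forall fun v => ?_)
  · exact Continuous.aestronglyMeasurable (by continuity)
  · have hs : (0:ℝ) ≤ ‖v - u‖ ^ 2 := sq_nonneg _
    set s : ℝ := ‖v - u‖ ^ 2 with hsdef
    have hE1 : (0:ℝ) < Real.exp (-(b/2) * s) := Real.exp_pos _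
    have hE1le : Real.exp (-(b/2) * s) ≤ 1 := by
      rw [Real.exp_le_one_iff]
      nlinarith
    have hsE : s * Real.exp (-(b/2) * s) ≤ 2 / b := by
      have h1 : (b/2) * s ≤ Real.exp ((b/2) * s) := by
        have := Real.add_one_le_exp ((b/2) * s); linarith
      have h2 : Real.exp (-(b/2)*s) * Real.exp ((b/2)*s) = 1 := by
        rw [← Real.exp_add]; norm_num
      have hb2 : (0:ℝ) < b / 2 := half_pos hb
      calc s * Real.exp (-(b/2)*s) = (2/b) * ((b/2)*s * Real.exp (-(b/2)*s)) := by
            field_simp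
        _ ≤ (2/b) * (Real.exp ((b/2)*s) * Real.exp (-(b/2)*s)) := by
            apply mul_le_mul_of_nonneg_left _ (by positivity)
            exact mul_le_mul_of_nonneg_right h1 hE1.le
        _ = 2 / b := by rw [mul_comm (Real.exp ((b/2)*s))]; rw [h2]; ring
    have hv2 : ‖v‖ ^ 2 ≤ 2 * s + 2 * ‖u‖ ^ 2 := by
      have h1 : ‖v‖ ≤ ‖v - u‖ + ‖u‖ := by
        calc ‖v‖ = ‖(v - u) + u‖ := by rw [sub_add_cancel]
          _ ≤ ‖v - u‖ + ‖u‖ := norm_add_le _ _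
      nlinarith [sq_nonneg (‖v - u‖ - ‖u‖), mul_self_le_mul_self (norm_nonneg v) h1,
        norm_nonneg (v - u), norm_nonneg u, norm_nonneg v, hsdef]
    have hexp : Real.exp (-b * s) = Real.exp (-(b/2) * s) * Real.exp (-(b/2) * s) := by
      rw [← Real.exp_add]; ring_nf
    rw [Real.norm_eq_abs, abs_of_nonneg (by positivity)]
    rw [hexp]
    nlinarith [sq_nonneg (‖v‖ : ℝ), mul_le_mul_of_nonneg_right hsE hE1.le,
      mul_le_mul_of_nonneg_right hE1le hE1.le]

set_option maxHeartbeats 1000000 in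
/-- Null-space (equilibrium) preservation of the conservative penalization
operator: for the Maxwellian f^M, the conservative parameters satisfy
λ_β = v_th² and u_β = u, hence the penalization flux vanishes identically. -/
theorem stmt14 (d : ℕ) (hd : 1 ≤ d)
    (n_M : ℝ) (hn_M : 0 < n_M) (u : EuclideanSpace ℝ (Fin d))
    (v_th : ℝ) (hv_th : 0 < v_th)
    (fM : EuclideanSpace ℝ (Fin d) → ℝ)
    (hfM : ∀ v, fM v = n_M * (2 * Real.pi) ^ (-(d : ℝ) / 2) * v_th ^ (-(d : ℤ)) *
      Real.exp (-‖v - u‖ ^ 2 / (2 * v_th ^ 2)))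
    (β : EuclideanSpace ℝ (Fin d) → ℝ)
    (hβc : Continuous β) (hβb : ∃ M, ∀ v, |β v| ≤ M) (hβpos : ∀ v, 0 < β v)
    (nβ Eβ Bβ : ℝ) (Aβ pβ : EuclideanSpace ℝ (Fin d))
    (hn : nβ = ∫ v, β v * fM v)
    (hp : pβ = ∫ v, (β v * fM v) • v)
    (hE : Eβ = ∫ v, ‖v‖ ^ 2 * (β v * fM v))
    (hA : Aβ = -∫ v, β v • gradient fM v)
    (hB : Bβ = -∫ v, β v * ⟪v, gradient fM v⟫)
    (lβ : ℝ) (hl : lβ = (nβ * Eβ - ‖pβ‖ ^ 2) / (nβ * Bβ - ⟪Aβ, pβ⟫))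
    (uβ : EuclideanSpace ℝ (Fin d)) (hu : uβ = (1 / nβ) • (pβ - lβ • Aβ)) :
    lβ = v_th ^ 2 ∧ uβ = u ∧
    ∀ v : EuclideanSpace ℝ (Fin d),
      β v • (gradient fM v + lβ⁻¹ • (fM v • (v - uβ))) = 0 := by
  obtain ⟨M, hM⟩ := hβb
  obtain ⟨c, hc⟩ : ∃ x : ℝ, x = n_M * (2 * Real.pi) ^ (-(d : ℝ) / 2) * v_th ^ (-(d : ℤ)) :=
    ⟨_, rfl⟩
  have hcpos : 0 < c := by
    rw [hc]
    apply mul_pos (mul_pos hn_M (Real.rpow_pos_of_pos (by positivity) _))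
    exact zpow_pos hv_th _
  obtain ⟨G, hGdef⟩ : ∃ Gf : EuclideanSpace ℝ (Fin d) → ℝ,
      Gf = fun v => Real.exp (-‖v - u‖ ^ 2 / (2 * v_th ^ 2)) := ⟨_, rfl⟩
  have hfM' : ∀ v, fM v = c * G v := by
    intro v; rw [hc, hGdef]; exact hfM v
  have hfun : fM = fun v => c * Real.exp (-‖v - u‖ ^ 2 / (2 * v_th ^ 2)) := by
    funext v; rw [hfM v, hc]
  have hGpos : ∀ v, 0 < G v := by intro v; rw [hGdef]; exact Real.exp_pos _
  have hGc : Continuous G := by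
    rw [hGdef]
    exact Real.continuous_exp.comp
      ((((continuous_id.sub continuous_const).norm.pow 2).neg).div_const _)
  have hfMc : Continuous fM := by
    rw [hfun]
    exact continuous_const.mul (Real.continuous_exp.comp
      ((((continuous_id.sub continuous_const).norm.pow 2).neg).div_const _))
  have hbpos : (0:ℝ) < (2 * v_th ^ 2)⁻¹ := by positivity
  have hGb : G = fun v => Real.exp (-(2 * v_th ^ 2)⁻¹ * ‖v - u‖ ^ 2) := by
    rw [hGdef]; funext v; congr 1; field_simp
  -- integrabilities
  have IG : Integrable G := by rw [hGb]; exact gauss_int' hbpos u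
  have IG2 : Integrable (fun v => ‖v‖ ^ 2 * G v) := by
    have h := sq_gauss_int' hbpos u
    refine h.congr (Filter.Eventually.of_forall fun v => ?_)
    rw [hGb]
  have hM0 : 0 < M := lt_of_lt_of_le (hβpos 0) (le_trans (le_abs_self _) (hM 0))
  obtain ⟨g, hgdef⟩ : ∃ gf : EuclideanSpace ℝ (Fin d) → ℝ,
      gf = fun v => β v * fM v := ⟨_, rfl⟩
  have hgv : ∀ v, g v = β v * fM v := fun v => by rw [hgdef]
  have hgpos : ∀ v, 0 < g v := fun v => by
    rw [hgv v, hfM' v]; exact mul_pos (hβpos v) (mul_pos hcpos (hGpos v))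
  have hgc : Continuous g := by rw [hgdef]; exact hβc.mul hfMc
  have I1 : Integrable g := by
    refine ((IG.const_mul c).bdd_mul hβc.aestronglyMeasurable (Filter.Eventually.of_forall fun v => hM v)).congr ?_
    exact Filter.Eventually.of_forall fun v => by simp only [hgv, hfM']
  have I3 : Integrable (fun v => ‖v‖ ^ 2 * g v) := by
    refine ((IG2.const_mul c).bdd_mul hβc.aestronglyMeasurable (Filter.Eventually.of_forall fun v => hM v)).congr ?_
    refine Filter.Eventually.of_forall fun v => ?_
    simp only [hgv, hfM']; ring
  have I2 : Integrable (fun v => g v • v) := by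
    refine (((IG.add IG2).const_mul (M * c)).mono' ?_ (Filter.Eventually.of_forall fun v => ?_))
    · exact (hgc.smul continuous_id).aestronglyMeasurable
    · rw [norm_smul, Real.norm_eq_abs, abs_of_pos (hgpos v)]
      have h1 : ‖v‖ ≤ 1 + ‖v‖ ^ 2 := by nlinarith [sq_nonneg (‖v‖ - 1), norm_nonneg v]
      have h2 : g v ≤ M * (c * G v) := by
        rw [hgv v, hfM' v]
        exact mul_le_mul_of_nonneg_right ((le_abs_self _).trans (hM v))
          (mul_pos hcpos (hGpos v)).le
      have h3 : 0 < c * G v := by have := hGpos v; positivity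
      calc g v * ‖v‖ ≤ (M * (c * G v)) * (1 + ‖v‖ ^ 2) := by
            apply mul_le_mul h2 h1 (norm_nonneg v) (by positivity)
        _ = M * c * (G v + ‖v‖ ^ 2 * G v) := by ring
  have hEg : Eβ = ∫ v, ‖v‖ ^ 2 * g v := by
    rw [hE]; congr 1; funext v; rw [hgv v]
  have hpg : pβ = ∫ v, g v • v := by
    rw [hp]; congr 1; funext v; rw [hgv v]
  have hng : nβ = ∫ v, g v := by
    rw [hn]; congr 1; funext v; rw [hgv v]
  -- gradient formula
  have hgrad : ∀ x, gradient fM x = (-(v_th ^ 2)⁻¹ * fM x) • (x - u) := by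
    intro x
    conv_lhs => rw [hfun]
    rw [(grad_gauss' c v_th u x).gradient, hfM x, hc]
  -- A formula
  have hAeq : Aβ = (v_th ^ 2)⁻¹ • (pβ - nβ • u) := by
    rw [hA]
    have e1 : (fun v => β v • gradient fM v)
        = fun v => (-(v_th ^ 2)⁻¹) • (g v • v - g v • u) := by
      funext v
      rw [hgrad v, hgv v, smul_smul, ← smul_sub, smul_smul]
      ring_nf
    rw [e1, integral_smul, integral_sub I2 (I1.smul_const u), integral_smul_const, ← hpg, ← hng]
    rw [← neg_smul]
    norm_num
  -- B formula
  have hBeq : Bβ = (v_th ^ 2)⁻¹ * (Eβ - ⟪u, pβ⟫) := by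
    rw [hB]
    have e1 : (fun v => β v * ⟪v, gradient fM v⟫)
        = fun v => (-(v_th ^ 2)⁻¹) * (‖v‖ ^ 2 * g v - (innerSL ℝ u) (g v • v)) := by
      funext v
      rw [hgrad v, real_inner_smul_right, inner_sub_right, real_inner_self_eq_norm_sq]
      simp only [innerSL_apply_apply, inner_smul_right]
      rw [hgv v, real_inner_comm]
      ring
    rw [e1, integral_const_mul,
      integral_sub I3 ((innerSL ℝ u).integrable_comp I2),
      ContinuousLinearMap.integral_comp_comm _ I2, ← hEg, ← hpg]
    simp only [innerSL_apply_apply]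
    ring
  -- positivity of nβ
  have hnpos : 0 < nβ := by
    rw [hng, integral_pos_iff_support_of_nonneg (fun v => (hgpos v).le) I1]
    have hsupp : Function.support g = Set.univ := by
      ext v; simp [Function.mem_support, (hgpos v).ne']
    rw [hsupp]
    simpa using (isOpen_univ.measure_pos (volume) ⟨0, trivial⟩)
  -- variance positivity
  haveI : Nonempty (Fin d) := ⟨⟨0, hd⟩⟩
  obtain ⟨m, hm⟩ : ∃ x : EuclideanSpace ℝ (Fin d), x = nβ⁻¹ • pβ := ⟨_, rfl⟩
  have evar : ∀ v, g v * ‖v - m‖ ^ 2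
      = ‖v‖ ^ 2 * g v - 2 * (innerSL ℝ m) (g v • v) + ‖m‖ ^ 2 * g v := by
    intro v
    rw [norm_sub_sq_real]
    simp only [innerSL_apply_apply, inner_smul_right]
    rw [real_inner_comm]
    ring
  have Ivar : Integrable (fun v => g v * ‖v - m‖ ^ 2) := by
    have h1 : Integrable (fun v =>
        (‖v‖ ^ 2 * g v - 2 * (innerSL ℝ m) (g v • v)) + ‖m‖ ^ 2 * g v) := by
      exact (I3.sub (((innerSL ℝ m).integrable_comp I2).const_mul 2)).add
        (I1.const_mul (‖m‖ ^ 2))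
    exact h1.congr (Filter.Eventually.of_forall fun v => (evar v).symm)
  have hvarval : (∫ v, g v * ‖v - m‖ ^ 2) = Eβ - 2 * ⟪m, pβ⟫ + ‖m‖ ^ 2 * nβ := by
    have e2 : (fun v => g v * ‖v - m‖ ^ 2)
        = fun v => (‖v‖ ^ 2 * g v - 2 * (innerSL ℝ m) (g v • v)) + ‖m‖ ^ 2 * g v := by
      funext v; rw [evar v]
    have h1 : Integrable (fun v => ‖v‖ ^ 2 * g v - 2 * (innerSL ℝ m) (g v • v)) := by
      exact I3.sub (((innerSL ℝ m).integrable_comp I2).const_mul 2)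
    have h2 : Integrable (fun v => ‖m‖ ^ 2 * g v) := I1.const_mul (‖m‖ ^ 2)
    rw [e2, integral_add h1 h2]
    rw [integral_sub I3 (((innerSL ℝ m).integrable_comp I2).const_mul 2),
      integral_const_mul, integral_const_mul,
      ContinuousLinearMap.integral_comp_comm _ I2, ← hEg, ← hpg, ← hng]
    simp only [innerSL_apply_apply]
  have hvarpos : 0 < ∫ v, g v * ‖v - m‖ ^ 2 := by
    rw [integral_pos_iff_support_of_nonneg
      (fun v => mul_nonneg (hgpos v).le (sq_nonneg _)) Ivar]
    have hsub : {m}ᶜ ⊆ Function.support (fun v => g v * ‖v - m‖ ^ 2) := by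
      intro v hv
      simp only [Set.mem_compl_iff, Set.mem_singleton_iff] at hv
      have hvm : v - m ≠ 0 := sub_ne_zero.mpr hv
      simp [Function.mem_support, (hgpos v).ne', hvm, norm_eq_zero]
    refine lt_of_lt_of_le ?_ (measure_mono hsub)
    obtain ⟨w, hw⟩ := exists_ne m
    exact isOpen_compl_singleton.measure_pos volume ⟨w, hw⟩
  have hN : nβ * Eβ - ‖pβ‖ ^ 2 = nβ * ∫ v, g v * ‖v - m‖ ^ 2 := by
    rw [hvarval, hm]
    rw [real_inner_smul_left, real_inner_self_eq_norm_sq, norm_smul]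
    rw [Real.norm_eq_abs, abs_of_pos (inv_pos.mpr hnpos)]
    field_simp
    ring
  have hNpos : 0 < nβ * Eβ - ‖pβ‖ ^ 2 := by
    rw [hN]; exact mul_pos hnpos hvarpos
  -- denominator
  have hden : nβ * Bβ - ⟪Aβ, pβ⟫ = (v_th ^ 2)⁻¹ * (nβ * Eβ - ‖pβ‖ ^ 2) := by
    rw [hBeq, hAeq]
    rw [real_inner_smul_left, inner_sub_left, real_inner_smul_left,
      real_inner_self_eq_norm_sq]
    rw [real_inner_comm pβ u]
    ring
  have hvth2 : (v_th ^ 2 : ℝ) ≠ 0 := by positivity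
  have hlval : lβ = v_th ^ 2 := by
    rw [hl, hden]
    rw [div_eq_iff (by positivity)]
    field_simp
  have huval : uβ = u := by
    rw [hu, hlval, hAeq, smul_smul]
    rw [mul_inv_cancel₀ hvth2, one_smul, sub_sub_cancel, smul_smul]
    rw [one_div, inv_mul_cancel₀ hnpos.ne', one_smul]
  refine ⟨hlval, huval, fun v => ?_⟩
  rw [hlval, huval, hgrad v, smul_smul, ← add_smul]
  have hz : -(v_th ^ 2)⁻¹ * fM v + (v_th ^ 2)⁻¹ * fM v = 0 := by ring
  rw [hz, zero_smul, smul_zero]
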